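/- Let q_n denote the number of independent dominating sets of the para-chain square cactus Q_n for n ≥ 1, and set q_0 = 1 (the one-vertex graph Q_0 has exactly one maximal independent set). Then, in the ring of formal power series over ℚ, ((1 - X)² - X³) · (∑_{n≥0} q_n Xⁿ) = 1 + X². -/

import Mathlib

/-- `S` is an independent dominating set of `G`: pairwise non-adjacent, and every
vertex outside `S` has a neighbour in `S`. -/
def IsIndepDomSet {V : Type*} (G : SimpleGraph V) (S : Finset V) : Prop :=
  (∀ v ∈ S, ∀ w ∈ S, ¬ G.Adj v w) ∧ ∀ v, v ∉ S → ∃ w ∈ S, G.Adj v w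

/-- The para-chain square cactus `Q n`: `Sum.inl i` is the cut vertex `x i`
(`0 ≤ i ≤ n`), `Sum.inr (Sum.inl k)` is `u (k+1)` and `Sum.inr (Sum.inr k)` is
`w (k+1)` (`0 ≤ k ≤ n-1`); the `i`-th square (`1 ≤ i ≤ n`) is the four-cycle
`x (i-1) – u i – x i – w i – x (i-1)`. -/
def paraSq (n : ℕ) : SimpleGraph (Fin (n + 1) ⊕ (Fin n ⊕ Fin n)) :=
  SimpleGraph.fromRel fun p q =>
    match p, q with
    | Sum.inl i, Sum.inr (Sum.inl k) => (i : ℕ) = (k : ℕ) ∨ (i : ℕ) = (k : ℕ) + 1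
    | Sum.inl i, Sum.inr (Sum.inr k) => (i : ℕ) = (k : ℕ) ∨ (i : ℕ) = (k : ℕ) + 1
    | _, _ => False

/-- The number of independent dominating sets of the para-chain square cactus `Q n`. -/
noncomputable def numIDSParaSq (n : ℕ) : ℕ :=
  Nat.card {S : Finset (Fin (n + 1) ⊕ (Fin n ⊕ Fin n)) // IsIndepDomSet (paraSq n) S}

namespace ParaSqAux

/-! ### Adjacency lemmas -/

variable {n : ℕ}

lemma adj_ll (i j : Fin (n+1)) : ¬ (paraSq n).Adj (Sum.inl i) (Sum.inl j) := by
  simp [paraSq, SimpleGraph.fromRel_adj]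

lemma adj_lu (i : Fin (n+1)) (k : Fin n) :
    (paraSq n).Adj (Sum.inl i) (Sum.inr (Sum.inl k)) ↔ (i : ℕ) = k ∨ (i : ℕ) = k + 1 := by
  simp [paraSq, SimpleGraph.fromRel_adj]

lemma adj_lw (i : Fin (n+1)) (k : Fin n) :
    (paraSq n).Adj (Sum.inl i) (Sum.inr (Sum.inr k)) ↔ (i : ℕ) = k ∨ (i : ℕ) = k + 1 := by
  simp [paraSq, SimpleGraph.fromRel_adj]

lemma adj_rr (a b : Fin n ⊕ Fin n) : ¬ (paraSq n).Adj (Sum.inr a) (Sum.inr b) := by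
  cases a <;> cases b <;> simp [paraSq, SimpleGraph.fromRel_adj]

/-! ### State sequences and transfer counting -/

def okb (a b : Fin 3) : Bool := decide ((a = 0 ∧ b ≠ 1) ∨ (a = 1 ∧ b ≠ 2) ∨ (a = 2 ∧ b = 1))

def good (n : ℕ) (s : Fin (n+1) → Fin 3) : Prop :=
  s 0 ≠ 1 ∧ ∀ i : Fin n, okb (s i.castSucc) (s i.succ) = true

instance (n : ℕ) : DecidablePred (good n) := fun s => by unfold good; infer_instance

def Tf (n : ℕ) (e : Fin 3) : Finset (Fin (n+1) → Fin 3) :=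
  Finset.univ.filter (fun s => good n s ∧ s (Fin.last n) = e)

def Vf (n : ℕ) : Finset (Fin (n+1) → Fin 3) :=
  Finset.univ.filter (fun s => good n s ∧ s (Fin.last n) ≠ 2)

lemma good_init {n : ℕ} {s : Fin (n+2) → Fin 3} (h : good (n+1) s) : good n (Fin.init s) := by
  obtain ⟨h0, ht⟩ := h
  refine ⟨by simpa [Fin.init] using h0, fun i => ?_⟩
  have := ht i.castSucc
  simpa only [Fin.init, Fin.succ_castSucc] using this

lemma good_snoc {n : ℕ} {t : Fin (n+1) → Fin 3} {e : Fin 3} (h : good n t)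
    (he : okb (t (Fin.last n)) e = true) : good (n+1) (Fin.snoc t e) := by
  obtain ⟨h0, ht⟩ := h
  refine ⟨?_, fun i => ?_⟩
  · have : (0 : Fin (n+2)) = Fin.castSucc 0 := rfl
    rw [this, Fin.snoc_castSucc]; exact h0
  · induction i using Fin.lastCases with
    | last =>
      rw [Fin.succ_last]
      simp only [Fin.snoc_castSucc, Fin.snoc_last]
      exact he
    | cast j =>
      rw [Fin.succ_castSucc]
      simp only [Fin.snoc_castSucc]
      exact ht j

lemma card_step (n : ℕ) (e : Fin 3) :
    (Tf (n+1) e).card =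
      (Finset.univ.filter (fun t : Fin (n+1) → Fin 3 =>
        good n t ∧ okb (t (Fin.last n)) e = true)).card := by
  refine Finset.card_nbij' (fun s => Fin.init s) (fun t => Fin.snoc t e) ?_ ?_ ?_ ?_
  · intro s hs
    simp only [Tf, Finset.mem_coe, Finset.mem_filter, Finset.mem_univ, true_and] at hs ⊢
    obtain ⟨hg, hl⟩ := hs
    refine ⟨good_init hg, ?_⟩
    have := hg.2 (Fin.last n)
    rw [Fin.succ_last, hl] at this
    simpa [Fin.init] using this
  · intro t ht
    simp only [Finset.mem_coe, Finset.mem_filter, Finset.mem_univ, true_and] at ht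
    simp only [Tf, Finset.mem_coe, Finset.mem_filter, Finset.mem_univ, true_and]
    exact ⟨good_snoc ht.1 ht.2, by simp⟩
  · intro s hs
    simp only [Tf, Finset.mem_coe, Finset.mem_filter, Finset.mem_univ, true_and] at hs
    rw [← hs.2]
    exact Fin.snoc_init_self s
  · intro t ht
    simp

lemma A_step (n : ℕ) : (Tf (n+1) 0).card = (Tf n 0).card + (Tf n 1).card := by
  rw [card_step]
  have h : ∀ d : Fin 3, okb d 0 = true ↔ d = 0 ∨ d = 1 := by decide
  have he : (Finset.univ.filter (fun t : Fin (n+1) → Fin 3 =>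
      good n t ∧ okb (t (Fin.last n)) 0 = true)) = Tf n 0 ∪ Tf n 1 := by
    ext t
    simp only [Tf, Finset.mem_filter, Finset.mem_univ, true_and, Finset.mem_union, h,
      and_or_left]
  rw [he, Finset.card_union_of_disjoint]
  unfold Tf; rw [Finset.disjoint_filter]
  rintro t - ⟨-, h0⟩ ⟨-, h1⟩
  rw [h0] at h1
  exact absurd h1 (by decide)

lemma B_step (n : ℕ) : (Tf (n+1) 1).card = (Tf n 1).card + (Tf n 2).card := by
  rw [card_step]
  have h : ∀ d : Fin 3, okb d 1 = true ↔ d = 1 ∨ d = 2 := by decide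
  have he : (Finset.univ.filter (fun t : Fin (n+1) → Fin 3 =>
      good n t ∧ okb (t (Fin.last n)) 1 = true)) = Tf n 1 ∪ Tf n 2 := by
    ext t
    simp only [Tf, Finset.mem_filter, Finset.mem_univ, true_and, Finset.mem_union, h,
      and_or_left]
  rw [he, Finset.card_union_of_disjoint]
  unfold Tf; rw [Finset.disjoint_filter]
  rintro t - ⟨-, h0⟩ ⟨-, h1⟩
  rw [h0] at h1
  exact absurd h1 (by decide)

lemma C_step (n : ℕ) : (Tf (n+1) 2).card = (Tf n 0).card := by
  rw [card_step]
  have h : ∀ d : Fin 3, okb d 2 = true ↔ d = 0 := by decide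
  congr 1
  ext t
  simp only [Tf, Finset.mem_filter, Finset.mem_univ, true_and, h]

lemma A_zero : (Tf 0 0).card = 1 := by decide
lemma B_zero : (Tf 0 1).card = 0 := by decide
lemma C_zero : (Tf 0 2).card = 1 := by decide

lemma V_card (n : ℕ) : (Vf n).card = (Tf n 0).card + (Tf n 1).card := by
  have he : Vf n = Tf n 0 ∪ Tf n 1 := by
    ext t
    have h : ∀ d : Fin 3, d ≠ 2 ↔ d = 0 ∨ d = 1 := by decide
    simp only [Vf, Tf, Finset.mem_filter, Finset.mem_univ, true_and, Finset.mem_union, h,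
      and_or_left]
  rw [he, Finset.card_union_of_disjoint]
  unfold Tf; rw [Finset.disjoint_filter]
  rintro t - ⟨-, h0⟩ ⟨-, h1⟩
  rw [h0] at h1
  exact absurd h1 (by decide)

/-! ### Encoding and decoding -/

abbrev Vt (n : ℕ) := Fin (n + 1) ⊕ (Fin n ⊕ Fin n)

def decP (s : Fin (n+1) → Fin 3) : Vt n → Bool
  | Sum.inl i => s i == 0
  | Sum.inr (Sum.inl k) => s k.succ == 1
  | Sum.inr (Sum.inr k) => s k.succ == 1

def dec (s : Fin (n+1) → Fin 3) : Finset (Vt n) :=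
  Finset.univ.filter (fun v => decP s v = true)

@[simp] lemma mem_dec_inl {s : Fin (n+1) → Fin 3} {i : Fin (n+1)} :
    Sum.inl i ∈ dec s ↔ s i = 0 := by rw [dec, Finset.mem_filter]; simp [decP]

@[simp] lemma mem_dec_u {s : Fin (n+1) → Fin 3} {k : Fin n} :
    Sum.inr (Sum.inl k) ∈ dec s ↔ s k.succ = 1 := by rw [dec, Finset.mem_filter]; simp [decP]

@[simp] lemma mem_dec_w {s : Fin (n+1) → Fin 3} {k : Fin n} :
    Sum.inr (Sum.inr k) ∈ dec s ↔ s k.succ = 1 := by rw [dec, Finset.mem_filter]; simp [decP]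

def enc (S : Finset (Vt n)) : Fin (n+1) → Fin 3 := fun i =>
  Fin.cases (if Sum.inl (0 : Fin (n+1)) ∈ S then 0 else 2)
    (fun k => if Sum.inl k.succ ∈ S then 0 else if Sum.inr (Sum.inl k) ∈ S then 1 else 2) i

lemma enc_zero (S : Finset (Vt n)) :
    enc S 0 = if Sum.inl (0 : Fin (n+1)) ∈ S then 0 else 2 := by
  simp [enc]

lemma enc_succ (S : Finset (Vt n)) (k : Fin n) :
    enc S k.succ =
      if Sum.inl k.succ ∈ S then 0 else if Sum.inr (Sum.inl k) ∈ S then 1 else 2 := by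
  simp [enc]

lemma fin3_cases : ∀ d : Fin 3, d = 0 ∨ d = 1 ∨ d = 2 := by decide

/-! ### Decoding a valid sequence gives an IDS -/

lemma dec_IDS {s : Fin (n+1) → Fin 3} (hs : s ∈ Vf n) : IsIndepDomSet (paraSq n) (dec s) := by
  rw [Vf, Finset.mem_filter] at hs
  obtain ⟨-, ⟨h0, htr⟩, hl⟩ := hs
  have key : ∀ (i : Fin (n+1)) (k : Fin n), s i = 0 → s k.succ = 1 →
      ((i : ℕ) = k ∨ (i : ℕ) = k + 1) → False := by
    rintro i k hi hk (h | h)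
    · have hik : i = k.castSucc := Fin.ext (by simpa using h)
      have := htr k
      rw [← hik, hi, hk] at this
      exact absurd this (by decide)
    · have hik : i = k.succ := Fin.ext (by simpa using h)
      rw [hik, hk] at hi
      exact absurd hi (by decide)
  constructor
  · rintro (i | m | m) hv (j | m' | m') hw hadj
    · exact adj_ll _ _ hadj
    · exact key i m' (mem_dec_inl.1 hv) (mem_dec_u.1 hw) ((adj_lu i m').1 hadj)
    · exact key i m' (mem_dec_inl.1 hv) (mem_dec_w.1 hw) ((adj_lw i m').1 hadj)
    · exact key j m (mem_dec_inl.1 hw) (mem_dec_u.1 hv) ((adj_lu j m).1 hadj.symm)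
    · exact adj_rr _ _ hadj
    · exact adj_rr _ _ hadj
    · exact key j m (mem_dec_inl.1 hw) (mem_dec_w.1 hv) ((adj_lw j m).1 hadj.symm)
    · exact adj_rr _ _ hadj
    · exact adj_rr _ _ hadj
  · rintro (i | k | k) hv
    · simp only [mem_dec_inl] at hv
      rcases fin3_cases (s i) with h | h | h
      · exact absurd h hv
      · have hi0 : i ≠ 0 := fun hh => h0 (hh ▸ h)
        obtain ⟨k, rfl⟩ := Fin.exists_succ_eq_of_ne_zero hi0
        exact ⟨Sum.inr (Sum.inl k), mem_dec_u.2 h, (adj_lu _ _).2 (Or.inr (by simp))⟩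
      · have hil : i ≠ Fin.last n := fun hh => hl (hh ▸ h)
        obtain ⟨j, rfl⟩ := Fin.eq_castSucc_of_ne_last hil
        have htj := htr j
        rw [h] at htj
        have hb : s j.succ = 1 := by
          have h2 : ∀ b : Fin 3, okb 2 b = true → b = 1 := by decide
          exact h2 _ htj
        exact ⟨Sum.inr (Sum.inl j), mem_dec_u.2 hb, (adj_lu _ _).2 (Or.inl (by simp))⟩
    · simp only [mem_dec_u] at hv
      have htk := htr k
      have hc : s k.castSucc = 0 ∨ s k.succ = 0 := by
        have h2 : ∀ a b : Fin 3, okb a b = true → b ≠ 1 → a = 0 ∨ b = 0 := by decide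
        exact h2 _ _ htk hv
      rcases hc with h | h
      · exact ⟨Sum.inl k.castSucc, mem_dec_inl.2 h, ((adj_lu _ _).2 (Or.inl (by simp))).symm⟩
      · exact ⟨Sum.inl k.succ, mem_dec_inl.2 h, ((adj_lu _ _).2 (Or.inr (by simp))).symm⟩
    · simp only [mem_dec_w] at hv
      have htk := htr k
      have hc : s k.castSucc = 0 ∨ s k.succ = 0 := by
        have h2 : ∀ a b : Fin 3, okb a b = true → b ≠ 1 → a = 0 ∨ b = 0 := by decide
        exact h2 _ _ htk hv
      rcases hc with h | h
      · exact ⟨Sum.inl k.castSucc, mem_dec_inl.2 h, ((adj_lw _ _).2 (Or.inl (by simp))).symm⟩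
      · exact ⟨Sum.inl k.succ, mem_dec_inl.2 h, ((adj_lw _ _).2 (Or.inr (by simp))).symm⟩

/-! ### Encoding an IDS gives a valid sequence -/

section Enc

variable {S : Finset (Vt n)} (hS : IsIndepDomSet (paraSq n) S)

include hS

lemma uw_iff (k : Fin n) : Sum.inr (Sum.inl k) ∈ S ↔ Sum.inr (Sum.inr k) ∈ S := by
  obtain ⟨hind, hdom⟩ := hS
  constructor
  · intro hu
    by_contra hw
    obtain ⟨t, ht, hadj⟩ := hdom _ hw
    rcases t with i | m | m
    · exact hind _ ht _ hu ((adj_lu i k).2 ((adj_lw i k).1 hadj.symm))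
    · exact adj_rr _ _ hadj
    · exact adj_rr _ _ hadj
  · intro hw
    by_contra hu
    obtain ⟨t, ht, hadj⟩ := hdom _ hu
    rcases t with i | m | m
    · exact hind _ ht _ hw ((adj_lw i k).2 ((adj_lu i k).1 hadj.symm))
    · exact adj_rr _ _ hadj
    · exact adj_rr _ _ hadj

lemma mem_x_iff (i : Fin (n+1)) : Sum.inl i ∈ S ↔ enc S i = 0 := by
  induction i using Fin.cases with
  | zero =>
    rw [enc_zero]
    split_ifs with h
    · simp [h]
    · simp [h]
  | succ k =>
    rw [enc_succ]
    split_ifs with h1 h2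
    · simp [h1]
    · simp [h1]
    · simp [h1]

lemma mem_u_iff (k : Fin n) : Sum.inr (Sum.inl k) ∈ S ↔ enc S k.succ = 1 := by
  obtain ⟨hind, hdom⟩ := hS
  rw [enc_succ]
  split_ifs with h1 h2
  · constructor
    · intro hu
      exact absurd ((adj_lu _ _).2 (Or.inr (by simp))) (fun hh => hind _ h1 _ hu hh)
    · intro hh; exact absurd hh (by decide)
  · simp [h2]
  · simp [h2]

lemma mem_w_iff (k : Fin n) : Sum.inr (Sum.inr k) ∈ S ↔ enc S k.succ = 1 := by
  rw [← uw_iff hS]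
  exact mem_u_iff hS k

lemma dec_enc : dec (enc S) = S := by
  ext v
  rcases v with i | k | k
  · rw [mem_dec_inl, ← mem_x_iff hS]
  · rw [mem_dec_u, ← mem_u_iff hS]
  · rw [mem_dec_w, ← mem_w_iff hS]

lemma enc_mem_Vf : enc S ∈ Vf n := by
  have hind := hS.1
  have hdom := hS.2
  rw [Vf, Finset.mem_filter]
  refine ⟨Finset.mem_univ _, ⟨?_, ?_⟩, ?_⟩
  · rw [enc_zero]
    split_ifs <;> decide
  · intro k
    have tri : ∀ a b : Fin 3, (a = 0 → b ≠ 1) → (a = 1 → b ≠ 2) → (a = 2 → b = 1) →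
        okb a b = true := by decide
    apply tri
    · intro ha hb
      have hx := (mem_x_iff hS k.castSucc).2 ha
      have hu := (mem_u_iff hS k).2 hb
      exact absurd ((adj_lu _ _).2 (Or.inl (by simp))) (fun hh => hind _ hx _ hu hh)
    · intro ha hb
      have hx1 : Sum.inl k.castSucc ∉ S := fun h => by
        rw [(mem_x_iff hS _).1 h] at ha; exact absurd ha (by decide)
      have hx2 : Sum.inl k.succ ∉ S := fun h => by
        rw [(mem_x_iff hS _).1 h] at hb; exact absurd hb (by decide)
      have hu : Sum.inr (Sum.inl k) ∉ S := fun h => by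
        rw [(mem_u_iff hS _).1 h] at hb; exact absurd hb (by decide)
      obtain ⟨t, ht, hadj⟩ := hdom _ hu
      rcases t with i | m | m
      · rcases (adj_lu i k).1 hadj.symm with h | h
        · exact hx1 (by rwa [show i = k.castSucc from Fin.ext (by simpa using h)] at ht)
        · exact hx2 (by rwa [show i = k.succ from Fin.ext (by simpa using h)] at ht)
      · exact absurd hadj (adj_rr _ _)
      · exact absurd hadj (adj_rr _ _)
    · intro ha
      have hx1 : Sum.inl k.castSucc ∉ S := fun h => by
        rw [(mem_x_iff hS _).1 h] at ha; exact absurd ha (by decide)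
      obtain ⟨t, ht, hadj⟩ := hdom _ hx1
      rcases t with i | m | m
      · exact absurd hadj (adj_ll _ _)
      · rcases (adj_lu _ m).1 hadj with h | h
        · have hmk : m = k := Fin.ext (by simpa using h.symm)
          exact (mem_u_iff hS k).1 (hmk ▸ ht)
        · have hmk : m.succ = k.castSucc := Fin.ext (by simp at h ⊢; omega)
          have := (mem_u_iff hS m).1 ht
          rw [hmk, ha] at this
          exact absurd this (by decide)
      · rcases (adj_lw _ m).1 hadj with h | h
        · have hmk : m = k := Fin.ext (by simpa using h.symm)
          exact (mem_u_iff hS k).1 (hmk ▸ (uw_iff hS m).2 ht)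
        · have hmk : m.succ = k.castSucc := Fin.ext (by simp at h ⊢; omega)
          have := (mem_u_iff hS m).1 ((uw_iff hS m).2 ht)
          rw [hmk, ha] at this
          exact absurd this (by decide)
  · intro h2
    have hx : Sum.inl (Fin.last n) ∉ S := fun h => by
      rw [(mem_x_iff hS _).1 h] at h2; exact absurd h2 (by decide)
    obtain ⟨t, ht, hadj⟩ := hdom _ hx
    rcases t with i | k | k
    · exact absurd hadj (adj_ll _ _)
    · have hik := (adj_lu _ k).1 hadj
      have hk : k.succ = Fin.last n := by
        have h1 := k.isLt
        apply Fin.ext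
        simp [Fin.val_last] at hik ⊢
        omega
      have := (mem_u_iff hS k).1 ht
      rw [hk, h2] at this
      exact absurd this (by decide)
    · have hik := (adj_lw _ k).1 hadj
      have hk : k.succ = Fin.last n := by
        have h1 := k.isLt
        apply Fin.ext
        simp [Fin.val_last] at hik ⊢
        omega
      have := (mem_u_iff hS k).1 ((uw_iff hS k).2 ht)
      rw [hk, h2] at this
      exact absurd this (by decide)

end Enc

lemma enc_dec {s : Fin (n+1) → Fin 3} (hs : s ∈ Vf n) : enc (dec s) = s := by
  rw [Vf, Finset.mem_filter] at hs
  obtain ⟨-, ⟨h0, -⟩, -⟩ := hs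
  have h3 : ∀ d : Fin 3, d ≠ 0 → d ≠ 1 → d = 2 := by decide
  funext i
  induction i using Fin.cases with
  | zero =>
    rw [enc_zero]
    simp only [mem_dec_inl]
    split_ifs with h
    · exact h.symm
    · exact (h3 _ h h0).symm
  | succ k =>
    rw [enc_succ]
    simp only [mem_dec_inl, mem_dec_u]
    split_ifs with h1 h2
    · exact h1.symm
    · exact h2.symm
    · exact (h3 _ h1 h2).symm

/-! ### Putting it together -/

noncomputable def theEquiv (n : ℕ) :
    {S : Finset (Vt n) // IsIndepDomSet (paraSq n) S} ≃ {s : Fin (n+1) → Fin 3 // s ∈ Vf n} where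
  toFun S := ⟨enc S.1, enc_mem_Vf S.2⟩
  invFun s := ⟨dec s.1, dec_IDS s.2⟩
  left_inv S := Subtype.ext (dec_enc S.2)
  right_inv s := Subtype.ext (enc_dec s.2)

lemma numIDS_val (n : ℕ) : numIDSParaSq n = (Tf n 0).card + (Tf n 1).card := by
  rw [numIDSParaSq, Nat.card_congr (theEquiv n), ← V_card, Nat.card_eq_finsetCard]

lemma q0 : numIDSParaSq 0 = 1 := by
  rw [numIDS_val, A_zero, B_zero]

lemma q1 : numIDSParaSq 1 = 2 := by
  simp [numIDS_val, A_step, B_step, C_step, A_zero, B_zero, C_zero]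

lemma q2 : numIDSParaSq 2 = 4 := by
  simp [numIDS_val, A_step, B_step, C_step, A_zero, B_zero, C_zero]

lemma qrec (n : ℕ) :
    numIDSParaSq (n+3) + numIDSParaSq (n+1) = 2 * numIDSParaSq (n+2) + numIDSParaSq n := by
  simp only [numIDS_val, A_step, B_step, C_step]
  ring

end ParaSqAux

open ParaSqAux PowerSeries in
/-- In `ℚ⟦X⟧`, `((1 - X)² - X³) · ∑_{n≥0} q_n Xⁿ = 1 + X²`, where `q n` is the
number of independent dominating sets of `Q n` (and `q 0 = 1`, `Q 0` being the
one-vertex graph). -/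
theorem numIDSParaSq_generating_function :
    ((1 - PowerSeries.X) ^ 2 - PowerSeries.X ^ 3) *
        PowerSeries.mk (fun n : ℕ => (numIDSParaSq n : ℚ)) =
      1 + PowerSeries.X ^ 2 := by
  set f := PowerSeries.mk (fun n : ℕ => (numIDSParaSq n : ℚ)) with hf
  have expand : ((1 - PowerSeries.X) ^ 2 - PowerSeries.X ^ 3) * f =
      f - ((X : ℚ⟦X⟧) ^ 1 * f + (X : ℚ⟦X⟧) ^ 1 * f) + (X : ℚ⟦X⟧) ^ 2 * f
        - (X : ℚ⟦X⟧) ^ 3 * f := by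
    ring
  rw [expand]
  ext d
  simp only [map_sub, map_add, coeff_X_pow_mul', hf, coeff_mk, coeff_one, coeff_X_pow]
  match d with
  | 0 => norm_num [q0]
  | 1 => norm_num [q0, q1]
  | 2 => norm_num [q0, q1, q2]
  | (m+3) =>
    have h := qrec m
    have hq : ((numIDSParaSq (m+3) : ℚ)) + (numIDSParaSq (m+1) : ℚ) =
        2 * (numIDSParaSq (m+2) : ℚ) + (numIDSParaSq m : ℚ) := by
      exact_mod_cast congrArg (fun x : ℕ => (x : ℚ)) h
    have e1 : m + 3 - 1 = m + 2 := by omega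
    have e2 : m + 3 - 2 = m + 1 := by omega
    have e3 : m + 3 - 3 = m := by omega
    rw [e1, e2, e3, if_pos (by omega : 1 ≤ m + 3), if_pos (by omega : 2 ≤ m + 3),
      if_pos (by omega : 3 ≤ m + 3), if_neg (by omega : ¬ (m + 3 = 0)),
      if_neg (by omega : ¬ (m + 3 = 2))]
    linarith
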